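/- Let A, B, C be three affinely independent points in ℝ² forming an acute triangle, and let y be the perimeter of its orthic (pedal) triangle. Then every closed rectifiable curve in ℝ² whose image intersects each of the three lines through B and C, through C and A, and through A and B has length at least y. -/

import Mathlib

open Set Metric MeasureTheory Real EuclideanGeometry
open scoped InnerProductSpace

section Helpers

variable {V : Type*} [NormedAddCommGroup V] [InnerProductSpace ℝ V]

private lemma reflectKey' (u v ha hb hc : V) (p q r : ℝ)
    (hpu : ⟪u, u⟫_ℝ = p) (hqv : ⟪v, v⟫_ℝ = q) (hruv : ⟪u, v⟫_ℝ = r) (hrvu : ⟪v, u⟫_ℝ = r)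
    (hP : 0 < p) (hQ : 0 < q) (hR : 0 < r) (hPR : r < p) (hQR : r < q)
    (eha : ha = (r / q) • v)
    (ehb : hb = v + ((q - r) / (p + q - 2 * r)) • (u - v))
    (ehc : hc = (r / p) • u) :
    0 < ‖ha - hb‖ ∧
      ⟪‖ha - hb‖⁻¹ • (ha - hb) - ‖hc - ha‖⁻¹ • (hc - ha), v⟫_ℝ = 0 := by
  have hW : 0 < p + q - 2 * r := by linarith
  have hX : ⟪ha - hb, v⟫_ℝ = -((q - r) * (p - r) / (p + q - 2 * r)) := by
    rw [eha, ehb]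
    simp only [inner_sub_left, inner_add_left, real_inner_smul_left, inner_sub_right,
      hpu, hqv, hruv, hrvu]
    field_simp [hW.ne', (show 0 < p + q - r * 2 by linarith).ne']
    ring
  have hY : ⟪hc - ha, v⟫_ℝ = -(r * (p - r) / p) := by
    rw [eha, ehc]
    simp only [inner_sub_left, real_inner_smul_left, hpu, hqv, hruv, hrvu]
    field_simp
    ring
  have hN1 : ‖ha - hb‖ ^ 2 = p * (q - r) ^ 2 / ((p + q - 2 * r) * q) := by
    rw [← real_inner_self_eq_norm_sq, eha, ehb]
    simp only [inner_sub_left, inner_sub_right, inner_add_left, inner_add_right,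
      real_inner_smul_left, real_inner_smul_right, hpu, hqv, hruv, hrvu]
    field_simp [hW.ne', (show 0 < p + q - r * 2 by linarith).ne']
    ring
  have hN3 : ‖hc - ha‖ ^ 2 = r ^ 2 * (p + q - 2 * r) / (p * q) := by
    rw [← real_inner_self_eq_norm_sq, eha, ehc]
    simp only [inner_sub_left, inner_sub_right, real_inner_smul_left, real_inner_smul_right,
      hpu, hqv, hruv, hrvu]
    field_simp
    ring
  have hN1pos : 0 < ‖ha - hb‖ ^ 2 := by
    rw [hN1]
    exact div_pos (mul_pos hP (pow_pos (by linarith) 2)) (mul_pos hW hQ)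
  have hN3pos : 0 < ‖hc - ha‖ ^ 2 := by
    rw [hN3]
    exact div_pos (mul_pos (pow_pos hR 2) hW) (mul_pos hP hQ)
  have n1pos : 0 < ‖ha - hb‖ := by
    rcases (norm_nonneg (ha - hb)).lt_or_eq with h | h
    · exact h
    · exfalso; rw [← h] at hN1pos; simp at hN1pos
  have n3pos : 0 < ‖hc - ha‖ := by
    rcases (norm_nonneg (hc - ha)).lt_or_eq with h | h
    · exact h
    · exfalso; rw [← h] at hN3pos; simp at hN3pos
  refine ⟨n1pos, ?_⟩
  have key : ‖hc - ha‖ * ((q - r) * (p - r) / (p + q - 2 * r))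
      = ‖ha - hb‖ * (r * (p - r) / p) := by
    have hnn1 : 0 ≤ ‖hc - ha‖ * ((q - r) * (p - r) / (p + q - 2 * r)) :=
      mul_nonneg (norm_nonneg _)
        (div_nonneg (mul_nonneg (by linarith) (by linarith)) (by linarith))
    have hnn2 : 0 ≤ ‖ha - hb‖ * (r * (p - r) / p) :=
      mul_nonneg (norm_nonneg _)
        (div_nonneg (mul_nonneg (by linarith) (by linarith)) (by linarith))
    refine (sq_eq_sq₀ hnn1 hnn2).mp ?_
    rw [mul_pow, mul_pow, hN1, hN3]
    field_simp
  have hmain : ‖ha - hb‖⁻¹ * ((q - r) * (p - r) / (p + q - 2 * r))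
      = ‖hc - ha‖⁻¹ * (r * (p - r) / p) := by
    rw [inv_mul_eq_div, inv_mul_eq_div, div_eq_div_iff n1pos.ne' n3pos.ne']
    linear_combination key
  rw [inner_sub_left, real_inner_smul_left, real_inner_smul_left, hX, hY]
  linear_combination -hmain

private lemma foot_sub {P Q X H : V}
    (hmem : H ∈ affineSpan ℝ ({Q, X} : Set V))
    (hperp : ⟪P - H, Q - X⟫_ℝ = 0) (hQX : X ≠ Q) :
    H - Q = (⟪P - Q, X - Q⟫_ℝ / ⟪X - Q, X - Q⟫_ℝ) • (X - Q) := by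
  obtain ⟨t, ht⟩ : ∃ t : ℝ, t • (X -ᵥ Q) = H -ᵥ Q :=
    vadd_left_mem_affineSpan_pair.mp (by rwa [vsub_vadd])
  rw [vsub_eq_sub, vsub_eq_sub] at ht
  have hXQ : ⟪X - Q, X - Q⟫_ℝ ≠ 0 := by
    have : X - Q ≠ 0 := sub_ne_zero.mpr hQX
    rw [real_inner_self_eq_norm_sq]
    exact pow_ne_zero 2 (norm_ne_zero_iff.mpr this)
  have e : ⟪(P - Q) - t • (X - Q), Q - X⟫_ℝ = 0 := by
    rw [show P - Q - t • (X - Q) = P - H by rw [ht]; abel]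
    exact hperp
  rw [inner_sub_left, real_inner_smul_left,
    show Q - X = -(X - Q) from (neg_sub X Q).symm, inner_neg_right, inner_neg_right] at e
  have h2 : ⟪P - Q, X - Q⟫_ℝ = t * ⟪X - Q, X - Q⟫_ℝ := by linarith
  rw [← ht, h2, mul_div_assoc, div_self hXQ, mul_one]

private lemma line_coeff {P Q X : V} (h : P ∈ affineSpan ℝ ({Q, X} : Set V)) :
    ∃ s : ℝ, P - Q = s • (X - Q) := by
  obtain ⟨t, ht⟩ : ∃ t : ℝ, t • (X -ᵥ Q) = P -ᵥ Q :=
    vadd_left_mem_affineSpan_pair.mp (by rwa [vsub_vadd])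
  rw [vsub_eq_sub, vsub_eq_sub] at ht
  exact ⟨t, ht.symm⟩

private lemma reflectMain (A B C HA HB HC : V)
    (hAB : A ≠ B) (hBC : B ≠ C) (hCA : C ≠ A)
    (haA : 0 < ⟪B - A, C - A⟫_ℝ) (haB : 0 < ⟪C - B, A - B⟫_ℝ) (haC : 0 < ⟪A - C, B - C⟫_ℝ)
    (hHAmem : HA ∈ affineSpan ℝ ({B, C} : Set V)) (hHAperp : ⟪A - HA, B - C⟫_ℝ = 0)
    (hHBmem : HB ∈ affineSpan ℝ ({C, A} : Set V)) (hHBperp : ⟪B - HB, C - A⟫_ℝ = 0)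
    (hHCmem : HC ∈ affineSpan ℝ ({A, B} : Set V)) (hHCperp : ⟪C - HC, A - B⟫_ℝ = 0) :
    0 < ‖HA - HB‖ ∧
      ⟪‖HA - HB‖⁻¹ • (HA - HB) - ‖HC - HA‖⁻¹ • (HC - HA), C - B⟫_ℝ = 0 := by
  have fA := foot_sub hHAmem hHAperp hBC.symm
  have fB := foot_sub hHBmem hHBperp hCA.symm
  have fC := foot_sub hHCmem hHCperp hAB.symm
  have hP : 0 < ⟪A - B, A - B⟫_ℝ := by
    rw [real_inner_self_eq_norm_sq]
    exact pow_pos (norm_sub_pos_iff.mpr hAB) 2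
  have hQ : 0 < ⟪C - B, C - B⟫_ℝ := by
    rw [real_inner_self_eq_norm_sq]
    exact pow_pos (norm_sub_pos_iff.mpr hBC.symm) 2
  have hR : 0 < ⟪A - B, C - B⟫_ℝ := by
    rw [real_inner_comm]; exact haB
  have eA : ⟪B - A, C - A⟫_ℝ = ⟪A - B, A - B⟫_ℝ - ⟪A - B, C - B⟫_ℝ := by
    simp only [inner_sub_left, inner_sub_right]
    simp only [real_inner_comm B A, real_inner_comm C A, real_inner_comm C B]
    ring
  have eC : ⟪A - C, B - C⟫_ℝ = ⟪C - B, C - B⟫_ℝ - ⟪A - B, C - B⟫_ℝ := by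
    simp only [inner_sub_left, inner_sub_right]
    simp only [real_inner_comm B A, real_inner_comm C A, real_inner_comm C B]
    ring
  have hPR : ⟪A - B, C - B⟫_ℝ < ⟪A - B, A - B⟫_ℝ := by rw [eA] at haA; linarith
  have hQR : ⟪A - B, C - B⟫_ℝ < ⟪C - B, C - B⟫_ℝ := by rw [eC] at haC; linarith
  have e1 : ⟪B - C, A - C⟫_ℝ = ⟪C - B, C - B⟫_ℝ - ⟪A - B, C - B⟫_ℝ := by
    simp only [inner_sub_left, inner_sub_right]
    simp only [real_inner_comm B A, real_inner_comm C A, real_inner_comm C B]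
    ring
  have e2 : ⟪A - C, A - C⟫_ℝ
      = ⟪A - B, A - B⟫_ℝ + ⟪C - B, C - B⟫_ℝ - 2 * ⟪A - B, C - B⟫_ℝ := by
    simp only [inner_sub_left, inner_sub_right]
    simp only [real_inner_comm B A, real_inner_comm C A, real_inner_comm C B]
    ring
  have e4 : ⟪C - A, B - A⟫_ℝ = ⟪A - B, A - B⟫_ℝ - ⟪A - B, C - B⟫_ℝ := by
    simp only [inner_sub_left, inner_sub_right]
    simp only [real_inner_comm B A, real_inner_comm C A, real_inner_comm C B]
    ring
  have e5 : ⟪B - A, B - A⟫_ℝ = ⟪A - B, A - B⟫_ℝ := by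
    simp only [inner_sub_left, inner_sub_right]
    simp only [real_inner_comm B A, real_inner_comm C A, real_inner_comm C B]
    ring
  have ehb : HB - B = (C - B)
      + ((⟪C - B, C - B⟫_ℝ - ⟪A - B, C - B⟫_ℝ)
          / (⟪A - B, A - B⟫_ℝ + ⟪C - B, C - B⟫_ℝ - 2 * ⟪A - B, C - B⟫_ℝ))
        • ((A - B) - (C - B)) := by
    rw [show HB - B = (HB - C) + (C - B) from by abel, fB, e1, e2,
      show A - C = (A - B) - (C - B) from by abel]
    abel
  have ehc : HC - B = (⟪A - B, C - B⟫_ℝ / ⟪A - B, A - B⟫_ℝ) • (A - B) := by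
    have hco : ⟪A - B, C - B⟫_ℝ / ⟪A - B, A - B⟫_ℝ
        = 1 - (⟪A - B, A - B⟫_ℝ - ⟪A - B, C - B⟫_ℝ) / ⟪A - B, A - B⟫_ℝ := by
      rw [eq_sub_iff_add_eq, ← add_div, div_eq_one_iff_eq hP.ne']
      ring
    rw [show HC - B = (HC - A) + (A - B) from by abel, fC, e4, e5,
      show B - A = -(A - B) from (neg_sub A B).symm, smul_neg, hco, sub_smul, one_smul]
    abel
  have key := reflectKey' (A - B) (C - B) (HA - B) (HB - B) (HC - B)
    ⟪A - B, A - B⟫_ℝ ⟪C - B, C - B⟫_ℝ ⟪A - B, C - B⟫_ℝ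
    rfl rfl rfl (real_inner_comm _ _) hP hQ hR hPR hQR fA ehb ehc
  rw [show HA - B - (HB - B) = HA - HB from by abel,
    show HC - B - (HA - B) = HC - HA from by abel] at key
  exact key

private lemma inner_pos_of_angle_lt (x y : V) (hx : x ≠ 0) (hy : y ≠ 0)
    (h : InnerProductGeometry.angle x y < π / 2) : 0 < ⟪x, y⟫_ℝ := by
  rw [← InnerProductGeometry.cos_angle_mul_norm_mul_norm]
  apply mul_pos
  · apply Real.cos_pos_of_mem_Ioo
    constructor
    · have := InnerProductGeometry.angle_nonneg x y
      have := Real.pi_pos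
      linarith
    · exact h
  · exact mul_pos (norm_pos_iff.mpr hx) (norm_pos_iff.mpr hy)

end Helpers

private lemma chain_le {E : Type*} [PseudoEMetricSpace E] (f : ℝ → E) (a b c : ℝ)
    (h0a : 0 ≤ a) (hab : a ≤ b) (hbc : b ≤ c) (hc1 : c ≤ 1) :
    edist (f a) (f 0) + edist (f b) (f a) + edist (f c) (f b) + edist (f 1) (f c)
      ≤ eVariationOn f (Icc 0 1) := by
  set u : ℕ → ℝ := fun n => match n with
    | 0 => 0
    | 1 => a
    | 2 => b
    | 3 => c
    | _ + 4 => 1 with hu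
  have hmono : Monotone u := by
    apply monotone_nat_of_le_succ
    intro n
    match n with
    | 0 => exact h0a
    | 1 => exact hab
    | 2 => exact hbc
    | 3 => exact hc1
    | n + 4 => exact le_refl 1
  have hmem : ∀ i, u i ∈ Icc (0 : ℝ) 1 := by
    intro i
    match i with
    | 0 => exact ⟨le_refl 0, zero_le_one⟩
    | 1 => exact ⟨h0a, hab.trans (hbc.trans hc1)⟩
    | 2 => exact ⟨h0a.trans hab, hbc.trans hc1⟩
    | 3 => exact ⟨(h0a.trans hab).trans hbc, hc1⟩
    | n + 4 => exact ⟨zero_le_one, le_refl 1⟩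
  have h := eVariationOn.sum_le (f := f) (n := 4) hmono hmem
  simpa [Finset.sum_range_succ, u] using h

/-- Fagnano-type lower bound: for an acute triangle, every closed rectifiable curve
visiting the three side lines has length at least the perimeter `y` of the orthic
(pedal) triangle. -/
theorem stmt_13 (A B C HA HB HC : EuclideanSpace ℝ (Fin 2)) (y : ℝ)
    (hind : AffineIndependent ℝ ![A, B, C])
    (hacuteA : ∠ B A C < π / 2)
    (hacuteB : ∠ A B C < π / 2)
    (hacuteC : ∠ A C B < π / 2)
    -- `HA`, `HB`, `HC` are the feet of the altitudes from `A`, `B`, `C`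
    (hHAmem : HA ∈ affineSpan ℝ ({B, C} : Set (EuclideanSpace ℝ (Fin 2))))
    (hHAperp : inner ℝ (A - HA) (B - C) = (0 : ℝ))
    (hHBmem : HB ∈ affineSpan ℝ ({C, A} : Set (EuclideanSpace ℝ (Fin 2))))
    (hHBperp : inner ℝ (B - HB) (C - A) = (0 : ℝ))
    (hHCmem : HC ∈ affineSpan ℝ ({A, B} : Set (EuclideanSpace ℝ (Fin 2))))
    (hHCperp : inner ℝ (C - HC) (A - B) = (0 : ℝ))
    (hy : y = dist HA HB + dist HB HC + dist HC HA)
    (γ : ℝ → EuclideanSpace ℝ (Fin 2))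
    (hcont : ContinuousOn γ (Icc 0 1))
    (hclosed : γ 0 = γ 1)
    (hBC : ((γ '' Icc 0 1) ∩
      (affineSpan ℝ ({B, C} : Set (EuclideanSpace ℝ (Fin 2))) :
        Set (EuclideanSpace ℝ (Fin 2)))).Nonempty)
    (hCA : ((γ '' Icc 0 1) ∩
      (affineSpan ℝ ({C, A} : Set (EuclideanSpace ℝ (Fin 2))) :
        Set (EuclideanSpace ℝ (Fin 2)))).Nonempty)
    (hAB : ((γ '' Icc 0 1) ∩
      (affineSpan ℝ ({A, B} : Set (EuclideanSpace ℝ (Fin 2))) :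
        Set (EuclideanSpace ℝ (Fin 2)))).Nonempty) :
    ENNReal.ofReal y ≤ eVariationOn γ (Icc 0 1) := by
  classical
  -- distinctness of the vertices
  have hne : ∀ {i j : Fin 3}, i ≠ j → ![A, B, C] i ≠ ![A, B, C] j :=
    fun hij => hind.injective.ne hij
  have hABne : A ≠ B := by simpa using hne (show (0 : Fin 3) ≠ 1 by decide)
  have hBCne : B ≠ C := by simpa using hne (show (1 : Fin 3) ≠ 2 by decide)
  have hCAne : C ≠ A := by simpa using hne (show (2 : Fin 3) ≠ 0 by decide)
  -- inner product positivity from acute angles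
  have iA1 : 0 < ⟪B - A, C - A⟫_ℝ := by
    apply inner_pos_of_angle_lt _ _ (sub_ne_zero.mpr hABne.symm) (sub_ne_zero.mpr hCAne)
    exact hacuteA
  have iB1 : 0 < ⟪A - B, C - B⟫_ℝ := by
    apply inner_pos_of_angle_lt _ _ (sub_ne_zero.mpr hABne) (sub_ne_zero.mpr hBCne.symm)
    exact hacuteB
  have iC1 : 0 < ⟪A - C, B - C⟫_ℝ := by
    apply inner_pos_of_angle_lt _ _ (sub_ne_zero.mpr hCAne.symm) (sub_ne_zero.mpr hBCne)
    exact hacuteC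
  have iB2 : 0 < ⟪C - B, A - B⟫_ℝ := by rw [real_inner_comm]; exact iB1
  -- the three reflection identities
  obtain ⟨n1pos, F1⟩ := reflectMain A B C HA HB HC hABne hBCne hCAne iA1 iB2 iC1
    hHAmem hHAperp hHBmem hHBperp hHCmem hHCperp
  obtain ⟨n2pos, F2⟩ := reflectMain B C A HB HC HA hBCne hCAne hABne iB2 iC1 iA1
    hHBmem hHBperp hHCmem hHCperp hHAmem hHAperp
  obtain ⟨n3pos, F3⟩ := reflectMain C A B HC HA HB hCAne hABne hBCne iC1 iA1 iB2
    hHCmem hHCperp hHAmem hHAperp hHBmem hHBperp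
  -- foot decomposition along the sides
  have fA := foot_sub hHAmem hHAperp hBCne.symm
  have fB := foot_sub hHBmem hHBperp hCAne.symm
  have fC := foot_sub hHCmem hHCperp hABne.symm
  -- the main geometric inequality
  have mainIneq : ∀ P Q R : EuclideanSpace ℝ (Fin 2),
      P ∈ affineSpan ℝ ({B, C} : Set (EuclideanSpace ℝ (Fin 2))) →
      Q ∈ affineSpan ℝ ({C, A} : Set (EuclideanSpace ℝ (Fin 2))) →
      R ∈ affineSpan ℝ ({A, B} : Set (EuclideanSpace ℝ (Fin 2))) →
      y ≤ dist P Q + dist Q R + dist R P := by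
    intro P Q R hP hQ hR
    set u1 := ‖HA - HB‖⁻¹ • (HA - HB) with hu1
    set u2 := ‖HB - HC‖⁻¹ • (HB - HC) with hu2
    set u3 := ‖HC - HA‖⁻¹ • (HC - HA) with hu3
    have hnu1 : ‖u1‖ = 1 := by
      rw [hu1, norm_smul, norm_inv, norm_norm, inv_mul_cancel₀ n1pos.ne']
    have hnu2 : ‖u2‖ = 1 := by
      rw [hu2, norm_smul, norm_inv, norm_norm, inv_mul_cancel₀ n2pos.ne']
    have hnu3 : ‖u3‖ = 1 := by
      rw [hu3, norm_smul, norm_inv, norm_norm, inv_mul_cancel₀ n3pos.ne']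
    have cs1 : ⟪u1, P - Q⟫_ℝ ≤ dist P Q := by
      have := real_inner_le_norm u1 (P - Q)
      rwa [hnu1, one_mul, ← dist_eq_norm] at this
    have cs2 : ⟪u2, Q - R⟫_ℝ ≤ dist Q R := by
      have := real_inner_le_norm u2 (Q - R)
      rwa [hnu2, one_mul, ← dist_eq_norm] at this
    have cs3 : ⟪u3, R - P⟫_ℝ ≤ dist R P := by
      have := real_inner_le_norm u3 (R - P)
      rwa [hnu3, one_mul, ← dist_eq_norm] at this
    have i1 : ⟪u1, HA - HB⟫_ℝ = dist HA HB := by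
      rw [hu1, real_inner_smul_left, real_inner_self_eq_norm_sq, dist_eq_norm, pow_two,
        ← mul_assoc, inv_mul_cancel₀ n1pos.ne', one_mul]
    have i2 : ⟪u2, HB - HC⟫_ℝ = dist HB HC := by
      rw [hu2, real_inner_smul_left, real_inner_self_eq_norm_sq, dist_eq_norm, pow_two,
        ← mul_assoc, inv_mul_cancel₀ n2pos.ne', one_mul]
    have i3 : ⟪u3, HC - HA⟫_ℝ = dist HC HA := by
      rw [hu3, real_inner_smul_left, real_inner_self_eq_norm_sq, dist_eq_norm, pow_two,
        ← mul_assoc, inv_mul_cancel₀ n3pos.ne', one_mul]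
    obtain ⟨sP, hsP⟩ := line_coeff hP
    obtain ⟨sQ, hsQ⟩ := line_coeff hQ
    obtain ⟨sR, hsR⟩ := line_coeff hR
    have z1 : ⟪u1 - u3, P - HA⟫_ℝ = 0 := by
      rw [show P - HA = (P - B) - (HA - B) from by abel, hsP, fA]
      simp only [inner_sub_right, real_inner_smul_right, F1]
      ring
    have z2 : ⟪u2 - u1, Q - HB⟫_ℝ = 0 := by
      rw [show Q - HB = (Q - C) - (HB - C) from by abel, hsQ, fB]
      simp only [inner_sub_right, real_inner_smul_right, F2]
      ring
    have z3 : ⟪u3 - u2, R - HC⟫_ℝ = 0 := by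
      rw [show R - HC = (R - A) - (HC - A) from by abel, hsR, fC]
      simp only [inner_sub_right, real_inner_smul_right, F3]
      ring
    have expand : ⟪u1, P - Q⟫_ℝ + ⟪u2, Q - R⟫_ℝ + ⟪u3, R - P⟫_ℝ
        = (⟪u1, HA - HB⟫_ℝ + ⟪u2, HB - HC⟫_ℝ + ⟪u3, HC - HA⟫_ℝ)
          + (⟪u1 - u3, P - HA⟫_ℝ + ⟪u2 - u1, Q - HB⟫_ℝ + ⟪u3 - u2, R - HC⟫_ℝ) := by
      simp only [inner_sub_left, inner_sub_right]
      ring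
    rw [hy]
    linarith [cs1, cs2, cs3, expand, z1, z2, z3, i1, i2, i3]
  -- extract visiting times
  obtain ⟨p1, hp1, hl1⟩ := hBC
  obtain ⟨t1, ht1, rfl⟩ := hp1
  obtain ⟨p2, hp2, hl2⟩ := hCA
  obtain ⟨t2, ht2, rfl⟩ := hp2
  obtain ⟨p3, hp3, hl3⟩ := hAB
  obtain ⟨t3, ht3, rfl⟩ := hp3
  rw [Set.mem_Icc] at ht1 ht2 ht3
  have hl1' : γ t1 ∈ affineSpan ℝ ({B, C} : Set (EuclideanSpace ℝ (Fin 2))) := hl1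
  have hl2' : γ t2 ∈ affineSpan ℝ ({C, A} : Set (EuclideanSpace ℝ (Fin 2))) := hl2
  have hl3' : γ t3 ∈ affineSpan ℝ ({A, B} : Set (EuclideanSpace ℝ (Fin 2))) := hl3
  -- the concluding step, for sorted times
  have finish : ∀ s1 s2 s3 : ℝ, 0 ≤ s1 → s1 ≤ s2 → s2 ≤ s3 → s3 ≤ 1 →
      y ≤ dist (γ s1) (γ s2) + dist (γ s2) (γ s3) + dist (γ s3) (γ s1) →
      ENNReal.ofReal y ≤ eVariationOn γ (Icc 0 1) := by
    intro s1 s2 s3 h1 h12 h23 h3 hper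
    refine le_trans ?_ (chain_le γ s1 s2 s3 h1 h12 h23 h3)
    rw [edist_dist, edist_dist, edist_dist, edist_dist,
      ← ENNReal.ofReal_add dist_nonneg dist_nonneg,
      ← ENNReal.ofReal_add (by positivity) dist_nonneg,
      ← ENNReal.ofReal_add (by positivity) dist_nonneg]
    apply ENNReal.ofReal_le_ofReal
    have tri : dist (γ s3) (γ s1) ≤ dist (γ s3) (γ 1) + dist (γ 0) (γ s1) := by
      rw [hclosed]
      exact dist_triangle _ _ _
    linarith [hper, tri, dist_comm (γ s1) (γ 0), dist_comm (γ s2) (γ s1),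
      dist_comm (γ s3) (γ s2), dist_comm (γ 1) (γ s3), dist_comm (γ s1) (γ s2),
      dist_comm (γ s2) (γ s3)]
  have base := mainIneq (γ t1) (γ t2) (γ t3) hl1' hl2' hl3'
  have dc12 := dist_comm (γ t1) (γ t2)
  have dc23 := dist_comm (γ t2) (γ t3)
  have dc31 := dist_comm (γ t3) (γ t1)
  rcases le_total t1 t2 with h12 | h21
  · rcases le_total t2 t3 with h23 | h32
    · exact finish t1 t2 t3 ht1.1 h12 h23 ht3.2 (by linarith)
    · rcases le_total t1 t3 with h13 | h31
      · exact finish t1 t3 t2 ht1.1 h13 h32 ht2.2 (by linarith)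
      · exact finish t3 t1 t2 ht3.1 h31 h12 ht2.2 (by linarith)
  · rcases le_total t1 t3 with h13 | h31
    · exact finish t2 t1 t3 ht2.1 h21 h13 ht3.2 (by linarith)
    · rcases le_total t2 t3 with h23 | h32
      · exact finish t2 t3 t1 ht2.1 h23 h31 ht1.2 (by linarith)
      · exact finish t3 t2 t1 ht3.1 h32 h21 ht1.2 (by linarith)
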